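/- Let n ≥ 2 and let f : ℂ → SL_n(ℂ) be a morphism with π₁(f(t)) = (1,0,...,0,t)ᵀ. Then the map ψ : SL_n(ℂ) → SL_n(ℂ), ψ(X) = X · f(x_{n1})⁻¹ · E_{n1}(x_{n1}) (where x_{n1} is the (n,1)-entry of X), is well-defined as a regular map, is an automorphism with inverse X ↦ X · E_{n1}(−x_{n1}) · f(x_{n1}), and satisfies ψ(f(t)) = E_{n1}(t) for all t ∈ ℂ. -/

import Mathlib

open Matrix

noncomputable section

abbrev SL (n : ℕ) := Matrix.SpecialLinearGroup (Fin n) ℂ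

/-- A self-map of `SL n ℂ` is regular (algebraic) if each matrix entry of the image is
given by a polynomial in the matrix entries of the argument. -/
def SLRegular {n : ℕ} (φ : SL n → SL n) : Prop :=
  ∀ i j : Fin n, ∃ P : MvPolynomial (Fin n × Fin n) ℂ,
    ∀ X : SL n, (φ X : Matrix (Fin n) (Fin n) ℂ) i j =
      MvPolynomial.eval (fun kl => (X : Matrix (Fin n) (Fin n) ℂ) kl.1 kl.2) P

/-- An algebraic automorphism of `SL n ℂ`: a regular map with a regular inverse. -/
def SLAlgAut {n : ℕ} (φ : SL n → SL n) : Prop :=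
  SLRegular φ ∧ ∃ ψ : SL n → SL n, SLRegular ψ ∧
    Function.LeftInverse ψ φ ∧ Function.RightInverse ψ φ

theorem stmt_9 (n : ℕ) (hn : 2 ≤ n) (f : ℂ → SL n)
    (P : Fin n → Fin n → Polynomial ℂ)
    (hP : ∀ (t : ℂ) (i j : Fin n), (f t : Matrix (Fin n) (Fin n) ℂ) i j = (P i j).eval t)
    (hcol1 : ∀ t : ℂ, (f t : Matrix (Fin n) (Fin n) ℂ) ⟨0, by omega⟩ ⟨0, by omega⟩ = 1)
    (hcoln : ∀ t : ℂ, (f t : Matrix (Fin n) (Fin n) ℂ) ⟨n - 1, by omega⟩ ⟨0, by omega⟩ = t)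
    (hcol0 : ∀ (t : ℂ) (i : Fin n), (i : ℕ) ≠ 0 → (i : ℕ) ≠ n - 1 →
      (f t : Matrix (Fin n) (Fin n) ℂ) i ⟨0, by omega⟩ = 0) :
    ∃ ψ χ : SL n → SL n,
      (∀ X : SL n, (ψ X : Matrix (Fin n) (Fin n) ℂ) =
        (X : Matrix (Fin n) (Fin n) ℂ) *
          (((f ((X : Matrix (Fin n) (Fin n) ℂ) ⟨n - 1, by omega⟩ ⟨0, by omega⟩))⁻¹ :
              SL n) : Matrix (Fin n) (Fin n) ℂ) *
          ((1 : Matrix (Fin n) (Fin n) ℂ) +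
            Matrix.single ⟨n - 1, by omega⟩ ⟨0, by omega⟩
              ((X : Matrix (Fin n) (Fin n) ℂ) ⟨n - 1, by omega⟩ ⟨0, by omega⟩))) ∧
      (∀ X : SL n, (χ X : Matrix (Fin n) (Fin n) ℂ) =
        (X : Matrix (Fin n) (Fin n) ℂ) *
          ((1 : Matrix (Fin n) (Fin n) ℂ) +
            Matrix.single ⟨n - 1, by omega⟩ ⟨0, by omega⟩
              (-((X : Matrix (Fin n) (Fin n) ℂ) ⟨n - 1, by omega⟩ ⟨0, by omega⟩))) *
          ((f ((X : Matrix (Fin n) (Fin n) ℂ) ⟨n - 1, by omega⟩ ⟨0, by omega⟩)) :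
            Matrix (Fin n) (Fin n) ℂ)) ∧
      SLRegular ψ ∧ SLRegular χ ∧
      Function.LeftInverse χ ψ ∧ Function.RightInverse χ ψ ∧
      ∀ t : ℂ, (ψ (f t) : Matrix (Fin n) (Fin n) ℂ) =
        (1 : Matrix (Fin n) (Fin n) ℂ) +
          Matrix.single ⟨n - 1, by omega⟩ ⟨0, by omega⟩ t := by
  
  have hn1 : n - 1 < n := by omega
  have h0n : 0 < n := by omega
  set i0 : Fin n := ⟨n - 1, hn1⟩ with hi0def
  set j0 : Fin n := ⟨0, h0n⟩ with hj0def
  have hij : i0 ≠ j0 := by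
    simp only [hi0def, hj0def, ne_eq, Fin.mk.injEq]
    omega
  let E : ℂ → SL n := fun c =>
    ⟨Matrix.transvection i0 j0 c, Matrix.det_transvection_of_ne i0 j0 hij c⟩
  have hEcoe : ∀ c, (E c : Matrix (Fin n) (Fin n) ℂ) = Matrix.transvection i0 j0 c :=
    fun _ => rfl
  let x : SL n → ℂ := fun X => (X : Matrix (Fin n) (Fin n) ℂ) i0 j0
  -- first-column description of f
  have hfcol : ∀ (s : ℂ) (k : Fin n),
      (f s : Matrix (Fin n) (Fin n) ℂ) k j0
        = (if k = j0 then (1 : ℂ) else 0) + (if k = i0 then s else 0) := by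
    intro s k
    rcases eq_or_ne k j0 with rfl | hkj
    · rw [if_pos rfl, if_neg (Ne.symm hij), add_zero]
      exact hcol1 s
    · rcases eq_or_ne k i0 with rfl | hki
      · rw [if_neg hkj, if_pos rfl, zero_add]
        exact hcoln s
      · rw [if_neg hkj, if_neg hki, add_zero]
        refine hcol0 s k (fun h => hkj (Fin.ext h)) (fun h => hki (Fin.ext h))
  -- entries of transvections
  have hEent : ∀ (c : ℂ) (k l : Fin n),
      (E c : Matrix (Fin n) (Fin n) ℂ) k l
        = (if k = l then (1 : ℂ) else 0) + (if i0 = k ∧ j0 = l then c else 0) := by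
    intro c k l
    rw [hEcoe]
    simp [Matrix.transvection, Matrix.one_apply, Matrix.single]
  have hEent' : ∀ (c : ℂ) (k : Fin n),
      (E c : Matrix (Fin n) (Fin n) ℂ) k j0
        = (if k = j0 then (1 : ℂ) else 0) + (if k = i0 then c else 0) := by
    intro c k
    rw [hEent]
    congr 1
    by_cases h : k = i0
    · rw [if_pos h, if_pos ⟨h.symm, rfl⟩]
    · rw [if_neg h, if_neg (fun hc => h hc.1.symm)]
  -- key column computations
  have hkey1 : ∀ (s : ℂ) (k : Fin n),
      ((((f s)⁻¹ : SL n) : Matrix (Fin n) (Fin n) ℂ) * (E s : Matrix (Fin n) (Fin n) ℂ)) k j0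
        = (1 : Matrix (Fin n) (Fin n) ℂ) k j0 := by
    intro s k
    rw [Matrix.mul_apply]
    have h : ∀ l, (E s : Matrix (Fin n) (Fin n) ℂ) l j0 = (f s : Matrix (Fin n) (Fin n) ℂ) l j0 := by
      intro l; rw [hEent', hfcol]
    rw [Finset.sum_congr rfl fun l _ => by rw [h l]]
    rw [← Matrix.mul_apply, ← Matrix.SpecialLinearGroup.coe_mul, inv_mul_cancel,
      Matrix.SpecialLinearGroup.coe_one]
  have hkey2 : ∀ (s : ℂ) (k : Fin n),
      ((E (-s) : Matrix (Fin n) (Fin n) ℂ) * (f s : Matrix (Fin n) (Fin n) ℂ)) k j0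
        = (1 : Matrix (Fin n) (Fin n) ℂ) k j0 := by
    intro s k
    rw [hEcoe]
    rcases eq_or_ne k i0 with rfl | hk
    · rw [Matrix.transvection_mul_apply_same, hfcol, hfcol]
      simp [hij, Ne.symm hij, Matrix.one_apply_ne hij]
    · rw [Matrix.transvection_mul_apply_of_ne _ _ _ _ hk, hfcol]
      simp [hk, Matrix.one_apply]
  -- the maps
  let ψ : SL n → SL n := fun X => X * (f (x X))⁻¹ * E (x X)
  let χ : SL n → SL n := fun X => X * E (-(x X)) * f (x X)
  have hψcoe : ∀ X : SL n, (ψ X : Matrix (Fin n) (Fin n) ℂ)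
      = (X : Matrix (Fin n) (Fin n) ℂ) * (((f (x X))⁻¹ : SL n) : Matrix (Fin n) (Fin n) ℂ)
        * (E (x X) : Matrix (Fin n) (Fin n) ℂ) := fun _ => rfl
  have hχcoe : ∀ X : SL n, (χ X : Matrix (Fin n) (Fin n) ℂ)
      = (X : Matrix (Fin n) (Fin n) ℂ) * (E (-(x X)) : Matrix (Fin n) (Fin n) ℂ)
        * (f (x X) : Matrix (Fin n) (Fin n) ℂ) := fun _ => rfl
  -- column preservation
  have hcolψ : ∀ (X : SL n) (k : Fin n),
      (ψ X : Matrix (Fin n) (Fin n) ℂ) k j0 = (X : Matrix (Fin n) (Fin n) ℂ) k j0 := by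
    intro X k
    rw [hψcoe, Matrix.mul_assoc, Matrix.mul_apply]
    simp_rw [hkey1]
    rw [← Matrix.mul_apply, Matrix.mul_one]
  have hcolχ : ∀ (X : SL n) (k : Fin n),
      (χ X : Matrix (Fin n) (Fin n) ℂ) k j0 = (X : Matrix (Fin n) (Fin n) ℂ) k j0 := by
    intro X k
    rw [hχcoe, Matrix.mul_assoc, Matrix.mul_apply]
    simp_rw [hkey2]
    rw [← Matrix.mul_apply, Matrix.mul_one]
  -- transvections multiply
  have hEadd : ∀ c d : ℂ, E c * E d = E (c + d) := by
    intro c d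
    exact Subtype.ext (Matrix.transvection_mul_transvection_same i0 j0 hij c d)
  have hE0 : E 0 = 1 := Subtype.ext (Matrix.transvection_zero i0 j0)
  have hEE : ∀ c : ℂ, E c * E (-c) = 1 := by
    intro c; rw [hEadd, add_neg_cancel, hE0]
  have hEE' : ∀ c : ℂ, E (-c) * E c = 1 := by
    intro c; rw [hEadd, neg_add_cancel, hE0]
  -- the polynomial machinery
  let σp : Polynomial ℂ →+* MvPolynomial (Fin n × Fin n) ℂ :=
    Polynomial.eval₂RingHom MvPolynomial.C (MvPolynomial.X (i0, j0))
  have hσ : ∀ (q : Polynomial ℂ) (X : SL n),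
      MvPolynomial.eval (fun kl => (X : Matrix (Fin n) (Fin n) ℂ) kl.1 kl.2) (σp q)
        = q.eval (x X) := by
    intro q X
    have h1 : (MvPolynomial.eval
        (fun kl : Fin n × Fin n => (X : Matrix (Fin n) (Fin n) ℂ) kl.1 kl.2)).comp
        (MvPolynomial.C : ℂ →+* MvPolynomial (Fin n × Fin n) ℂ) = RingHom.id ℂ := by
      ext c; simp
    rw [show σp q = Polynomial.eval₂ MvPolynomial.C (MvPolynomial.X (i0, j0)) q from rfl,
      Polynomial.hom_eval₂, h1]
    simp only [MvPolynomial.eval_X]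
    rfl
  obtain ⟨Q, hQ⟩ : ∃ Q : Matrix (Fin n) (Fin n) (Polynomial ℂ),
      ∀ (s : ℂ) (k l : Fin n),
        (((f s)⁻¹ : SL n) : Matrix (Fin n) (Fin n) ℂ) k l = (Q k l).eval s := by
    refine ⟨(Matrix.of fun k l => P k l).adjugate, fun s k l => ?_⟩
    have hmap : (Polynomial.evalRingHom s).mapMatrix (Matrix.of fun k l => P k l)
        = (f s : Matrix (Fin n) (Fin n) ℂ) := by
      ext a b
      simp [hP]
    rw [Matrix.SpecialLinearGroup.coe_inv, ← hmap, ← RingHom.map_adjugate]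
    simp
  let Ep : Fin n → Fin n → Polynomial ℂ := fun k l =>
    (if k = l then 1 else 0) + (if i0 = k ∧ j0 = l then Polynomial.X else 0)
  have hEp : ∀ (c : ℂ) (k l : Fin n),
      (E c : Matrix (Fin n) (Fin n) ℂ) k l = (Ep k l).eval c := by
    intro c k l
    rw [hEent]
    simp only [Ep]
    split_ifs <;> simp
  let Ep' : Fin n → Fin n → Polynomial ℂ := fun k l =>
    (if k = l then 1 else 0) + (if i0 = k ∧ j0 = l then -Polynomial.X else 0)
  have hEp' : ∀ (c : ℂ) (k l : Fin n),
      (E (-c) : Matrix (Fin n) (Fin n) ℂ) k l = (Ep' k l).eval c := by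
    intro c k l
    rw [hEent]
    simp only [Ep']
    split_ifs <;> simp
  -- regularity of ψ
  have hregψ : SLRegular ψ := by
    intro i j
    refine ⟨∑ k, (∑ l, MvPolynomial.X (i, l) * σp (Q l k)) * σp (Ep k j), fun X => ?_⟩
    have lhs : (ψ X : Matrix (Fin n) (Fin n) ℂ) i j
        = ∑ k, (∑ l, (X : Matrix (Fin n) (Fin n) ℂ) i l * (Q l k).eval (x X))
            * (Ep k j).eval (x X) := by
      rw [hψcoe, Matrix.mul_apply]
      refine Finset.sum_congr rfl fun k _ => ?_
      rw [Matrix.mul_apply, hEp]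
      congr 1
      refine Finset.sum_congr rfl fun l _ => ?_
      rw [hQ]
    rw [lhs, _root_.map_sum]
    refine Finset.sum_congr rfl fun k _ => ?_
    rw [_root_.map_mul, map_sum, hσ]
    congr 1
    refine Finset.sum_congr rfl fun l _ => ?_
    rw [_root_.map_mul, hσ, MvPolynomial.eval_X]
  -- regularity of χ
  have hregχ : SLRegular χ := by
    intro i j
    refine ⟨∑ k, (∑ l, MvPolynomial.X (i, l) * σp (Ep' l k)) * σp (P k j), fun X => ?_⟩
    have lhs : (χ X : Matrix (Fin n) (Fin n) ℂ) i j
        = ∑ k, (∑ l, (X : Matrix (Fin n) (Fin n) ℂ) i l * (Ep' l k).eval (x X))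
            * (P k j).eval (x X) := by
      rw [hχcoe, Matrix.mul_apply]
      refine Finset.sum_congr rfl fun k _ => ?_
      rw [Matrix.mul_apply, hP]
      congr 1
      refine Finset.sum_congr rfl fun l _ => ?_
      rw [hEp']
    rw [lhs, _root_.map_sum]
    refine Finset.sum_congr rfl fun k _ => ?_
    rw [_root_.map_mul, map_sum, hσ]
    congr 1
    refine Finset.sum_congr rfl fun l _ => ?_
    rw [_root_.map_mul, hσ, MvPolynomial.eval_X]
  -- inverse properties
  have hli : Function.LeftInverse χ ψ := by
    intro X
    have hx : x (ψ X) = x X := hcolψ X i0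
    show ψ X * E (-(x (ψ X))) * f (x (ψ X)) = X
    rw [hx]
    show X * (f (x X))⁻¹ * E (x X) * E (-(x X)) * f (x X) = X
    rw [mul_assoc (X * (f (x X))⁻¹), hEE, mul_one, mul_assoc, inv_mul_cancel, mul_one]
  have hri : Function.RightInverse χ ψ := by
    intro X
    have hx : x (χ X) = x X := hcolχ X i0
    show χ X * (f (x (χ X)))⁻¹ * E (x (χ X)) = X
    rw [hx]
    show X * E (-(x X)) * f (x X) * (f (x X))⁻¹ * E (x X) = X
    rw [mul_assoc (X * E (-(x X))), mul_inv_cancel, mul_one, mul_assoc, hEE', mul_one]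
  refine ⟨ψ, χ, fun X => rfl, fun X => rfl, hregψ, hregχ, hli, hri, ?_⟩
  intro t
  have hxt : x (f t) = t := hcoln t
  show ((f t * (f (x (f t)))⁻¹ * E (x (f t)) : SL n) : Matrix (Fin n) (Fin n) ℂ) = _
  rw [hxt, mul_inv_cancel, one_mul]
  rfl
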